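/- Let x, x' ∈ Σ_q^n with supp(x−x') = {i_1 < i_2 < ⋯ < i_d}, d ≥ 2, and set i_0 = 0 and i_{d+1} = n+1; let 0 = j_0 < j_1 < ⋯ < j_m = n be the right endpoints of the runs of x and 0 = j'_0 < j'_1 < ⋯ < j'_{m'} = n the right endpoints of the runs of x'. Fix λ, λ' ∈ [d] with λ ≤ λ', and let S = |supp(x−x') ∖ [i_λ, i_{λ'}]| and Δ = |{i ∈ [i_λ, i_{λ'}−1] : x'_i ≠ x_{i+1}}|. Then: (a) if d' < S + Δ, there is no pair (j_i, j'_{i'}) with i_{λ−1} < j_i ≤ i_λ ≤ i_{λ'} ≤ j'_{i'} < i_{λ'+1} and d_H(x_{[n]∖{j_i}}, x'_{[n]∖{j'_{i'}}}) = d'; and (b) if d' ≥ S + Δ, the number of pairs (j_i, j'_{i'}) with i_{λ−1} < j_i ≤ i_λ ≤ i_{λ'} ≤ j'_{i'} < i_{λ'+1} and d_H(x_{[n]∖{j_i}}, x'_{[n]∖{j'_{i'}}}) = d' is at most d' − S − Δ + 1. -/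

import Mathlib

/-- Sequences of length `n` are modelled as functions `ℕ → Fin q` whose relevant
positions are `1, …, n` (1-based, as in the paper). `delN x j` deletes position `j`. -/
def delN {q : ℕ} (x : ℕ → Fin q) (j : ℕ) : ℕ → Fin q :=
  fun i => if i < j then x i else x (i + 1)

/-- Hamming distance between two length-`n` sequences (positions `1, …, n`). -/
def hdist {q : ℕ} (n : ℕ) (u v : ℕ → Fin q) : ℕ :=
  ((Finset.Icc 1 n).filter fun i => u i ≠ v i).card

/-- `j 0 = 0 < j 1 < ⋯ < j m = n` are the right endpoints of the runs of `x`. -/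
def IsRunDecomp {q : ℕ} (n m : ℕ) (x : ℕ → Fin q) (j : ℕ → ℕ) : Prop :=
  j 0 = 0 ∧ j m = n ∧ (∀ i, i < m → j i < j (i + 1)) ∧
  (∀ i, 1 ≤ i → i ≤ m → ∀ a b, j (i - 1) + 1 ≤ a → a ≤ j i →
      j (i - 1) + 1 ≤ b → b ≤ j i → x a = x b) ∧
  (∀ i, 1 ≤ i → i < m → x (j i) ≠ x (j i + 1))

private lemma monoAux (f : ℕ → ℕ) (m : ℕ) (h : ∀ i, i < m → f i < f (i + 1)) :
    ∀ a b, a < b → b ≤ m → f a < f b := by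
  intro a b hab hbm
  induction b with
  | zero => omega
  | succ c ih =>
    rcases Nat.lt_or_ge a c with h1 | h1
    · exact (ih h1 (by omega)).trans (h c (by omega))
    · have : a = c := by omega
      subst this; exact h a (by omega)


/-- Here `e` enumerates the support: `e 0 = 0 = i₀`, `e (d+1) = n+1 = i_{d+1}`,
`e` is strictly increasing on `{0, …, d+1}`, and
`supp(x − x') = {e 1 < e 2 < ⋯ < e d}`.  With `S = |supp(x − x') ∖ [i_λ, i_{λ'}]|` and
`Δ = |{i ∈ [i_λ, i_{λ'}−1] : x'_i ≠ x_{i+1}}|`: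
(a) if `d' < S + Δ` there is no pair of run endpoints `(j_i, j'_{i'})` with
`i_{λ−1} < j_i ≤ i_λ ≤ i_{λ'} ≤ j'_{i'} < i_{λ'+1}` and
`d_H(x_{[n]∖{j_i}}, x'_{[n]∖{j'_{i'}}}) = d'`; and
(b) if `d' ≥ S + Δ` there are at most `d' − S − Δ + 1` such pairs. -/
theorem stmt13 (q n m m' d : ℕ) (hq : 2 ≤ q) (hd : 2 ≤ d)
    (x x' : ℕ → Fin q) (e : ℕ → ℕ)
    (he0 : e 0 = 0) (hetop : e (d + 1) = n + 1)
    (hemono : ∀ a b, a < b → b ≤ d + 1 → e a < e b)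
    (hsupp : ((Finset.Icc 1 n).filter fun k => x k ≠ x' k) = (Finset.Icc 1 d).image e)
    (j j' : ℕ → ℕ)
    (hx : IsRunDecomp n m x j) (hx' : IsRunDecomp n m' x' j')
    (lam lam' : ℕ) (hlam1 : 1 ≤ lam) (hlamle : lam ≤ lam') (hlam'd : lam' ≤ d)
    (S Δ : ℕ)
    (hS : S = (((Finset.Icc 1 n).filter fun k => x k ≠ x' k) \
        Finset.Icc (e lam) (e lam')).card)
    (hΔ : Δ = ((Finset.Icc (e lam) (e lam' - 1)).filter fun i => x' i ≠ x (i + 1)).card)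
    (d' : ℕ) :
    (d' < S + Δ →
      (Finset.Icc 1 m ×ˢ Finset.Icc 1 m').filter (fun p =>
        e (lam - 1) < j p.1 ∧ j p.1 ≤ e lam ∧ e lam' ≤ j' p.2 ∧ j' p.2 < e (lam' + 1) ∧
        hdist (n - 1) (delN x (j p.1)) (delN x' (j' p.2)) = d') = ∅) ∧
    (S + Δ ≤ d' →
      ((Finset.Icc 1 m ×ˢ Finset.Icc 1 m').filter fun p =>
        e (lam - 1) < j p.1 ∧ j p.1 ≤ e lam ∧ e lam' ≤ j' p.2 ∧ j' p.2 < e (lam' + 1) ∧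
        hdist (n - 1) (delN x (j p.1)) (delN x' (j' p.2)) = d').card
          ≤ d' - S - Δ + 1) := by
  obtain ⟨hj0, hjm, hjstep, hjrun, hjend⟩ := hx
  obtain ⟨hj'0, hj'm, hj'step, hj'run, hj'end⟩ := hx'
  have hjmono := monoAux j m hjstep
  have hj'mono := monoAux j' m' hj'step
  have hemono' : ∀ a b, a ≤ b → b ≤ d + 1 → e a ≤ e b := by
    intro a b h1 h2
    rcases h1.lt_or_eq with h | h
    · exact (hemono a b h h2).le
    · rw [h]
  have helm1 : e (lam - 1) < e lam := hemono _ _ (by omega) (by omega)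
  have hell : e lam ≤ e lam' := hemono' _ _ hlamle (by omega)
  have helt' : e lam' < e (lam' + 1) := hemono _ _ (by omega) (by omega)
  have he1 : 1 ≤ e lam := by have := hemono 0 lam (by omega) (by omega); omega
  have hen : e lam' ≤ n := by
    have := hemono lam' (d + 1) (by omega) (by omega); omega
  have hen' : e (lam' + 1) ≤ n + 1 := by
    have := hemono' (lam' + 1) (d + 1) (by omega) le_rfl; omega
  have hn1 : 1 ≤ n := by omega
  -- support characterization
  have hsupp' : ∀ k, k ∈ (Finset.Icc 1 n).filter (fun k => x k ≠ x' k) ↔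
      ∃ t, 1 ≤ t ∧ t ≤ d ∧ e t = k := by
    intro k
    rw [hsupp]
    simp only [Finset.mem_image, Finset.mem_Icc]
    constructor
    · rintro ⟨t, ⟨h1, h2⟩, h3⟩; exact ⟨t, h1, h2, h3⟩
    · rintro ⟨t, h1, h2, h3⟩; exact ⟨t, ⟨h1, h2⟩, h3⟩
  have hkey1 : ∀ k, k ∈ (Finset.Icc 1 n).filter (fun k => x k ≠ x' k) →
      k < e lam → k ≤ e (lam - 1) := by
    intro k hk hlt
    obtain ⟨t, ht1, htd, rfl⟩ := (hsupp' k).1 hk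
    have htl : t ≤ lam - 1 := by
      by_contra h
      have : lam ≤ t := by omega
      have := hemono' lam t this (by omega); omega
    exact hemono' t (lam - 1) htl (by omega)
  have hkey2 : ∀ k, k ∈ (Finset.Icc 1 n).filter (fun k => x k ≠ x' k) →
      e lam' < k → e (lam' + 1) ≤ k := by
    intro k hk hlt
    obtain ⟨t, ht1, htd, rfl⟩ := (hsupp' k).1 hk
    have htl : lam' + 1 ≤ t := by
      by_contra h
      have : t ≤ lam' := by omega
      have := hemono' t lam' this (by omega); omega
    exact hemono' (lam' + 1) t htl (by omega)
  have hnotsupp1 : ∀ k, e (lam - 1) < k → k < e lam → x k = x' k := by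
    intro k h1 h2
    by_contra hne
    have hk : k ∈ (Finset.Icc 1 n).filter (fun k => x k ≠ x' k) := by
      simp only [Finset.mem_filter, Finset.mem_Icc]
      exact ⟨⟨by omega, by omega⟩, hne⟩
    have := hkey1 k hk h2; omega
  have hnotsupp2 : ∀ k, e lam' < k → k < e (lam' + 1) → x k = x' k := by
    intro k h1 h2
    by_contra hne
    have hk : k ∈ (Finset.Icc 1 n).filter (fun k => x k ≠ x' k) := by
      simp only [Finset.mem_filter, Finset.mem_Icc]
      exact ⟨⟨by omega, by omega⟩, hne⟩
    have := hkey2 k hk h1; omega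
  -- the Hamming-distance formula
  have hform : ∀ p1 p2, p1 ∈ Finset.Icc 1 m → p2 ∈ Finset.Icc 1 m' →
      e (lam - 1) < j p1 → j p1 ≤ e lam → e lam' ≤ j' p2 → j' p2 < e (lam' + 1) →
      hdist (n - 1) (delN x (j p1)) (delN x' (j' p2)) =
        S + Δ + ((Finset.Icc (j p1) (e lam - 1)).filter fun k => x' k ≠ x (k + 1)).card
              + ((Finset.Icc (e lam') (j' p2 - 1)).filter fun k => x' k ≠ x (k + 1)).card := by
    intro p1 p2 hp1 hp2 h1 h2 h3 h4
    set jp := j p1 with hjp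
    set jq := j' p2 with hjq
    have hjp1 : 1 ≤ jp := by omega
    have hjpq : jp ≤ jq := by omega
    have hjqn : jq ≤ n := by omega
    -- split the distance set into three pieces
    have hT : (Finset.Icc 1 (n - 1)).filter (fun k => delN x jp k ≠ delN x' jq k) =
        ((Finset.Icc 1 (jp - 1)).filter fun k => x k ≠ x' k) ∪
        ((Finset.Icc jp (jq - 1)).filter fun k => x' k ≠ x (k + 1)) ∪
        ((Finset.Icc jq (n - 1)).filter fun k => x (k + 1) ≠ x' (k + 1)) := by
      ext k
      simp only [Finset.mem_union, Finset.mem_filter, Finset.mem_Icc]; simp only [delN]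
      by_cases hk1 : k < jp <;> by_cases hk2 : k < jq
      · simp only [if_pos hk1, if_pos hk2]
        constructor
        · rintro ⟨⟨a, b⟩, c⟩; exact Or.inl (Or.inl ⟨⟨a, by omega⟩, c⟩)
        · rintro ((⟨⟨a, b⟩, c⟩ | ⟨⟨a, b⟩, c⟩) | ⟨⟨a, b⟩, c⟩)
          · exact ⟨⟨a, by omega⟩, c⟩
          · omega
          · omega
      · omega
      · simp only [if_neg hk1, if_pos hk2]
        constructor
        · rintro ⟨⟨a, b⟩, c⟩; exact Or.inl (Or.inr ⟨⟨by omega, by omega⟩, c.symm⟩)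
        · rintro ((⟨⟨a, b⟩, c⟩ | ⟨⟨a, b⟩, c⟩) | ⟨⟨a, b⟩, c⟩)
          · omega
          · exact ⟨⟨by omega, by omega⟩, c.symm⟩
          · omega
      · simp only [if_neg hk1, if_neg hk2]
        constructor
        · rintro ⟨⟨a, b⟩, c⟩; exact Or.inr ⟨⟨by omega, b⟩, c⟩
        · rintro ((⟨⟨a, b⟩, c⟩ | ⟨⟨a, b⟩, c⟩) | ⟨⟨a, b⟩, c⟩)
          · omega
          · omega
          · exact ⟨⟨by omega, b⟩, c⟩
    have hd12 : Disjoint ((Finset.Icc 1 (jp - 1)).filter fun k => x k ≠ x' k)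
        ((Finset.Icc jp (jq - 1)).filter fun k => x' k ≠ x (k + 1)) := by
      rw [Finset.disjoint_left]
      intro a ha hb
      simp only [Finset.mem_filter, Finset.mem_Icc] at ha hb
      omega
    have hd123 : Disjoint (((Finset.Icc 1 (jp - 1)).filter fun k => x k ≠ x' k) ∪
        ((Finset.Icc jp (jq - 1)).filter fun k => x' k ≠ x (k + 1)))
        ((Finset.Icc jq (n - 1)).filter fun k => x (k + 1) ≠ x' (k + 1)) := by
      rw [Finset.disjoint_left]
      intro a ha hb
      simp only [Finset.mem_union, Finset.mem_filter, Finset.mem_Icc] at ha hb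
      omega
    -- first piece: support left of jp
    have hT1 : (Finset.Icc 1 (jp - 1)).filter (fun k => x k ≠ x' k) =
        ((Finset.Icc 1 n).filter fun k => x k ≠ x' k).filter (fun k => k < jp) := by
      ext k
      simp only [Finset.mem_filter, Finset.mem_Icc]
      constructor
      · rintro ⟨⟨a, b⟩, c⟩; exact ⟨⟨⟨a, by omega⟩, c⟩, by omega⟩
      · rintro ⟨⟨⟨a, b⟩, c⟩, hlt⟩; exact ⟨⟨a, by omega⟩, c⟩
    -- third piece: shifted support right of jq
    have hT3 : ((Finset.Icc jq (n - 1)).filter fun k => x (k + 1) ≠ x' (k + 1)).card =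
        (((Finset.Icc 1 n).filter fun k => x k ≠ x' k).filter (fun k => jq < k)).card := by
      apply Finset.card_bij (fun k _ => k + 1)
      · intro a ha
        simp only [Finset.mem_filter, Finset.mem_Icc] at ha ⊢
        exact ⟨⟨⟨by omega, by omega⟩, ha.2⟩, by omega⟩
      · intro a ha b hb hab
        omega
      · intro b hb
        simp only [Finset.mem_filter, Finset.mem_Icc] at hb
        refine ⟨b - 1, ?_, by omega⟩
        simp only [Finset.mem_filter, Finset.mem_Icc]
        have hb1 : b - 1 + 1 = b := by omega
        rw [hb1]
        exact ⟨⟨by omega, by omega⟩, hb.1.2⟩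
    -- the two outer pieces make up S
    have hsplit : ((Finset.Icc 1 n).filter fun k => x k ≠ x' k) \
        Finset.Icc (e lam) (e lam') =
        ((Finset.Icc 1 n).filter fun k => x k ≠ x' k).filter (fun k => k < jp) ∪
        ((Finset.Icc 1 n).filter fun k => x k ≠ x' k).filter (fun k => jq < k) := by
      ext k
      simp only [Finset.mem_sdiff, Finset.mem_union, Finset.mem_filter, Finset.mem_Icc]
      constructor
      · rintro ⟨⟨hk1, hk2⟩, hk3⟩
        rcases Nat.lt_or_ge k (e lam) with hc | hc
        · have hks : k ∈ (Finset.Icc 1 n).filter (fun k => x k ≠ x' k) := by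
            simp only [Finset.mem_filter, Finset.mem_Icc]
            exact ⟨hk1, hk2⟩
          have := hkey1 k hks hc
          exact Or.inl ⟨⟨hk1, hk2⟩, by omega⟩
        · have hc2 : e lam' < k := by omega
          have hks : k ∈ (Finset.Icc 1 n).filter (fun k => x k ≠ x' k) := by
            simp only [Finset.mem_filter, Finset.mem_Icc]
            exact ⟨hk1, hk2⟩
          have := hkey2 k hks hc2
          exact Or.inr ⟨⟨hk1, hk2⟩, by omega⟩
      · rintro (⟨⟨hk1, hk2⟩, hk3⟩ | ⟨⟨hk1, hk2⟩, hk3⟩)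
        · exact ⟨⟨hk1, hk2⟩, by omega⟩
        · exact ⟨⟨hk1, hk2⟩, by omega⟩
    have hdS : Disjoint (((Finset.Icc 1 n).filter fun k => x k ≠ x' k).filter (fun k => k < jp))
        (((Finset.Icc 1 n).filter fun k => x k ≠ x' k).filter (fun k => jq < k)) := by
      rw [Finset.disjoint_left]
      intro a ha hb
      simp only [Finset.mem_filter, Finset.mem_Icc] at ha hb
      omega
    have hScard : S =
        (((Finset.Icc 1 n).filter fun k => x k ≠ x' k).filter (fun k => k < jp)).card +
        (((Finset.Icc 1 n).filter fun k => x k ≠ x' k).filter (fun k => jq < k)).card := by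
      rw [hS, hsplit, Finset.card_union_of_disjoint hdS]
    -- the middle piece splits into three
    have hmid : Finset.Icc jp (jq - 1) =
        Finset.Icc jp (e lam - 1) ∪ Finset.Icc (e lam) (e lam' - 1) ∪
        Finset.Icc (e lam') (jq - 1) := by
      ext k
      simp only [Finset.mem_union, Finset.mem_Icc]
      omega
    have hdm1 : Disjoint ((Finset.Icc jp (e lam - 1)).filter fun k => x' k ≠ x (k + 1))
        ((Finset.Icc (e lam) (e lam' - 1)).filter fun k => x' k ≠ x (k + 1)) := by
      rw [Finset.disjoint_left]
      intro a ha hb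
      simp only [Finset.mem_filter, Finset.mem_Icc] at ha hb
      omega
    have hdm2 : Disjoint (((Finset.Icc jp (e lam - 1)).filter fun k => x' k ≠ x (k + 1)) ∪
        ((Finset.Icc (e lam) (e lam' - 1)).filter fun k => x' k ≠ x (k + 1)))
        ((Finset.Icc (e lam') (jq - 1)).filter fun k => x' k ≠ x (k + 1)) := by
      rw [Finset.disjoint_left]
      intro a ha hb
      simp only [Finset.mem_union, Finset.mem_filter, Finset.mem_Icc] at ha hb
      omega
    have hT2 : ((Finset.Icc jp (jq - 1)).filter fun k => x' k ≠ x (k + 1)).card =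
        ((Finset.Icc jp (e lam - 1)).filter fun k => x' k ≠ x (k + 1)).card + Δ +
        ((Finset.Icc (e lam') (jq - 1)).filter fun k => x' k ≠ x (k + 1)).card := by
      rw [hmid, Finset.filter_union, Finset.filter_union,
        Finset.card_union_of_disjoint hdm2, Finset.card_union_of_disjoint hdm1, hΔ]
    rw [hdist, hT, Finset.card_union_of_disjoint hd123, Finset.card_union_of_disjoint hd12,
      hT1, hT3, hT2]
    omega
  -- strict monotonicity of the left counts
  have hMA : ∀ p1 q1, p1 ∈ Finset.Icc 1 m → q1 ∈ Finset.Icc 1 m → p1 < q1 →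
      e (lam - 1) < j p1 → j q1 ≤ e lam →
      ((Finset.Icc (j q1) (e lam - 1)).filter fun k => x' k ≠ x (k + 1)).card <
      ((Finset.Icc (j p1) (e lam - 1)).filter fun k => x' k ≠ x (k + 1)).card := by
    intro p1 q1 hp1 hq1 hlt hgt hle
    simp only [Finset.mem_Icc] at hp1 hq1
    have hjlt : j p1 < j q1 := hjmono p1 q1 hlt hq1.2
    apply Finset.card_lt_card
    rw [Finset.ssubset_iff_of_subset
      (Finset.filter_subset_filter _ (Finset.Icc_subset_Icc_left hjlt.le))]
    refine ⟨j p1, ?_, ?_⟩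
    · simp only [Finset.mem_filter, Finset.mem_Icc]
      refine ⟨⟨le_rfl, by omega⟩, ?_⟩
      have hx1 : x (j p1) ≠ x (j p1 + 1) := hjend p1 hp1.1 (by omega)
      have hx2 : x (j p1) = x' (j p1) := hnotsupp1 (j p1) hgt (by omega)
      rw [← hx2]
      exact hx1
    · simp only [Finset.mem_filter, Finset.mem_Icc]
      intro h
      omega
  -- strict monotonicity of the right counts
  have hMB : ∀ p2 q2, p2 ∈ Finset.Icc 1 m' → q2 ∈ Finset.Icc 1 m' → p2 < q2 →
      e lam' ≤ j' p2 → j' q2 < e (lam' + 1) →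
      ((Finset.Icc (e lam') (j' p2 - 1)).filter fun k => x' k ≠ x (k + 1)).card <
      ((Finset.Icc (e lam') (j' q2 - 1)).filter fun k => x' k ≠ x (k + 1)).card := by
    intro p2 q2 hp2 hq2 hlt hge hle
    simp only [Finset.mem_Icc] at hp2 hq2
    have hjlt : j' p2 < j' q2 := hj'mono p2 q2 hlt hq2.2
    apply Finset.card_lt_card
    rw [Finset.ssubset_iff_of_subset
      (Finset.filter_subset_filter _ (Finset.Icc_subset_Icc_right (by omega)))]
    refine ⟨j' p2, ?_, ?_⟩
    · simp only [Finset.mem_filter, Finset.mem_Icc]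
      refine ⟨⟨hge, by omega⟩, ?_⟩
      have hx1 : x' (j' p2) ≠ x' (j' p2 + 1) := hj'end p2 hp2.1 (by omega)
      have hx2 : x (j' p2 + 1) = x' (j' p2 + 1) := hnotsupp2 (j' p2 + 1) (by omega) (by omega)
      rw [hx2]
      exact hx1
    · simp only [Finset.mem_filter, Finset.mem_Icc]
      intro h
      have : 1 ≤ e lam' := by have := hemono 0 lam' (by omega) (by omega); omega
      omega
  constructor
  · intro hlt
    rw [Finset.eq_empty_iff_forall_notMem]
    rintro ⟨p1, p2⟩ hp
    simp only [Finset.mem_filter, Finset.mem_product] at hp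
    obtain ⟨⟨hp1, hp2⟩, c1, c2, c3, c4, c5⟩ := hp
    rw [hform p1 p2 hp1 hp2 c1 c2 c3 c4] at c5
    omega
  · intro hge
    have hcard : (Finset.range (d' - S - Δ + 1)).card = d' - S - Δ + 1 :=
      Finset.card_range _
    rw [← hcard]
    apply Finset.card_le_card_of_injOn
      (fun p : ℕ × ℕ =>
        ((Finset.Icc (j p.1) (e lam - 1)).filter fun k => x' k ≠ x (k + 1)).card)
    · intro p hp
      simp only [Finset.mem_coe, Finset.mem_filter, Finset.mem_product] at hp
      obtain ⟨⟨hp1, hp2⟩, c1, c2, c3, c4, c5⟩ := hp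
      rw [hform p.1 p.2 hp1 hp2 c1 c2 c3 c4] at c5
      simp only [Finset.mem_coe, Finset.mem_range]
      omega
    · intro p hp pq hpq hab
      dsimp only at hab
      simp only [Finset.coe_filter, Set.mem_setOf_eq, Finset.mem_product] at hp hpq
      obtain ⟨⟨hp1, hp2⟩, c1, c2, c3, c4, c5⟩ := hp
      obtain ⟨⟨hq1, hq2⟩, e1, e2, e3, e4, e5⟩ := hpq
      have h11 : p.1 = pq.1 := by
        by_contra hne
        rcases Nat.lt_or_ge p.1 pq.1 with hc | hc
        · have := hMA p.1 pq.1 hp1 hq1 hc c1 e2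
          omega
        · have := hMA pq.1 p.1 hq1 hp1 (by omega) e1 c2
          omega
      rw [hform p.1 p.2 hp1 hp2 c1 c2 c3 c4] at c5
      rw [hform pq.1 pq.2 hq1 hq2 e1 e2 e3 e4] at e5
      have h22 : p.2 = pq.2 := by
        by_contra hne
        rcases Nat.lt_or_ge p.2 pq.2 with hc | hc
        · have := hMB p.2 pq.2 hp2 hq2 hc c3 e4
          rw [h11] at c5
          omega
        · have := hMB pq.2 p.2 hq2 hp2 (by omega) e3 c4
          rw [h11] at c5
          omega
      exact Prod.ext h11 h22
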